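/- For every operator A ∈ L(X⊗Z) there exists a linear map Ψ_A: L(Z)→L(X), namely the unique map with Choi operator J(Ψ_A) = conj(A), such that for every linear map Φ: L(X)→L(Y) and every B ∈ L(Y⊗Z), ⟨B, (Φ⊗id_Z)(A)⟩ = ⟨(id_{L(Y)}⊗Ψ_A)(B), J(Φ)⟩. Moreover, if A is positive semidefinite then Ψ_A is completely positive. -/

import Mathlib

open Matrix
open scoped Kronecker ComplexOrder

noncomputable section

/-- `Φ ⊗ id` : apply a linear map `Φ` on `L(X)` to the first tensor factor of `L(X ⊗ Z)`. -/
def lmapTensorId {n m k : Type*} [Fintype n] [Fintype k]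
    (Φ : Matrix n n ℂ →ₗ[ℂ] Matrix m m ℂ)
    (M : Matrix (n × k) (n × k) ℂ) : Matrix (m × k) (m × k) ℂ :=
  fun p q => Φ (fun i j => M (i, p.2) (j, q.2)) p.1 q.1

/-- `id ⊗ Ψ` : apply a linear map `Ψ` on `L(Z)` to the second tensor factor of `L(Y ⊗ Z)`. -/
def idTensorLmap {n k l : Type*} [Fintype n] [Fintype k]
    (Ψ : Matrix k k ℂ →ₗ[ℂ] Matrix l l ℂ)
    (M : Matrix (n × k) (n × k) ℂ) : Matrix (n × l) (n × l) ℂ :=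
  fun p q => Ψ (fun a b => M (p.1, a) (q.1, b)) p.2 q.2

/-- Complete positivity: `Φ ⊗ id_k` maps positive semidefinite operators to positive
semidefinite operators for every finite-dimensional ancilla `k`. -/
def IsCompletelyPositive {n m : Type*} [Fintype n] [Fintype m]
    (Φ : Matrix n n ℂ →ₗ[ℂ] Matrix m m ℂ) : Prop :=
  ∀ (k : Type) [Fintype k] [DecidableEq k],
    ∀ M : Matrix (n × k) (n × k) ℂ, M.PosSemidef → (lmapTensorId Φ M).PosSemidef

def IsTracePreserving {n m : Type*} [Fintype n] [Fintype m]
    (Φ : Matrix n n ℂ →ₗ[ℂ] Matrix m m ℂ) : Prop :=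
  ∀ M : Matrix n n ℂ, (Φ M).trace = M.trace

/-- Partial trace over the first tensor factor. -/
def trFst {n k : Type*} [Fintype n] (M : Matrix (n × k) (n × k) ℂ) : Matrix k k ℂ :=
  fun a b => ∑ i : n, M (i, a) (i, b)

/-- Partial trace over the second tensor factor. -/
def trSnd {n k : Type*} [Fintype k] (M : Matrix (n × k) (n × k) ℂ) : Matrix n n ℂ :=
  fun i j => ∑ a : k, M (i, a) (j, a)

/-- Hilbert-Schmidt inner product `⟨A, B⟩ = Tr(A* B)`. -/
def minner {n : Type*} [Fintype n] (A B : Matrix n n ℂ) : ℂ := (Aᴴ * B).trace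

/-- The Dec-2024 `Matrix.PosSemidef.sqrt`, spelled out (that definition is gone). -/
def posSemidefSqrtOld {n : Type*} [Fintype n] [DecidableEq n] {M : Matrix n n ℂ}
    (hM : M.PosSemidef) : Matrix n n ℂ :=
  hM.1.eigenvectorUnitary.1 * diagonal ((↑) ∘ (√·) ∘ hM.1.eigenvalues) *
    (star hM.1.eigenvectorUnitary : Matrix n n ℂ)

open Classical in
/-- Square root of a positive semidefinite matrix (junk value `0` otherwise). -/
def msqrt {n : Type*} [Fintype n] [DecidableEq n] (M : Matrix n n ℂ) : Matrix n n ℂ :=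
  if h : M.PosSemidef then posSemidefSqrtOld h else 0

/-- Trace norm `‖M‖₁ = Tr √(M* M)`. -/
def traceNorm {n : Type*} [Fintype n] [DecidableEq n] (M : Matrix n n ℂ) : ℝ :=
  ((posSemidefSqrtOld (Matrix.posSemidef_conjTranspose_mul_self M)).trace).re

/-- Fidelity `F(Q, R) = ‖√Q √R‖₁` of positive semidefinite matrices. -/
def fid {n : Type*} [Fintype n] [DecidableEq n] (Q R : Matrix n n ℂ) : ℝ :=
  traceNorm (msqrt Q * msqrt R)

/-- Choi-Jamiolkowski operator `J(Φ) = Σ_{i,j} Φ(|i⟩⟨j|) ⊗ |i⟩⟨j|`. -/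
def choi {n m : Type*} [Fintype n] [DecidableEq n] [Fintype m]
    (Φ : Matrix n n ℂ →ₗ[ℂ] Matrix m m ℂ) : Matrix (m × n) (m × n) ℂ :=
  fun p q => Φ (Matrix.single p.2 q.2 1) p.1 q.1

/-- Tensor product of vectors. -/
def tensorVec {α β : Type*} (v : α → ℂ) (w : β → ℂ) : α × β → ℂ := fun p => v p.1 * w p.2

/-- `u = (|00⟩ + |11⟩)/√2`. -/
def uVec : Fin 2 × Fin 2 → ℂ := fun p =>
  if p = (0, 0) then (Real.sqrt 2 : ℂ)⁻¹ else if p = (1, 1) then (Real.sqrt 2 : ℂ)⁻¹ else 0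

/-- `v = cos(π/8)|00⟩ + sin(π/8)|11⟩`. -/
def vVec : Fin 2 × Fin 2 → ℂ := fun p =>
  if p = (0, 0) then (Real.cos (Real.pi / 8) : ℂ)
  else if p = (1, 1) then (Real.sin (Real.pi / 8) : ℂ) else 0

/-- `w = -sin(π/8)|00⟩ + cos(π/8)|11⟩`. -/
def wVec : Fin 2 × Fin 2 → ℂ := fun p =>
  if p = (0, 0) then -(Real.sin (Real.pi / 8) : ℂ)
  else if p = (1, 1) then (Real.cos (Real.pi / 8) : ℂ) else 0



section Aux

lemma minner_eq {n : Type*} [Fintype n] (A B : Matrix n n ℂ) :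
    minner A B = ∑ p, ∑ q, star (A p q) * B p q := by
  rw [minner, Matrix.trace]
  simp only [Matrix.diag_apply, Matrix.mul_apply, Matrix.conjTranspose_apply]
  rw [Finset.sum_comm]

/-- The map `Ψ_A` with Choi operator `conj A`. -/
def psiMap {n k : Type*} [Fintype n] [Fintype k]
    (A : Matrix (n × k) (n × k) ℂ) : Matrix k k ℂ →ₗ[ℂ] Matrix n n ℂ where
  toFun M := Matrix.of fun i j => ∑ a, ∑ b, M a b * star (A (i, a) (j, b))
  map_add' M N := by
    ext i j
    simp [add_mul, Finset.sum_add_distrib]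
  map_smul' c M := by
    ext i j
    simp [Finset.mul_sum, mul_assoc]

lemma psiMap_apply {n k : Type*} [Fintype n] [Fintype k]
    (A : Matrix (n × k) (n × k) ℂ) (M : Matrix k k ℂ) (i j : n) :
    psiMap A M i j = ∑ a, ∑ b, M a b * star (A (i, a) (j, b)) := rfl

lemma lmap_apply_entry {n m : Type*} [Fintype n] [DecidableEq n] [Fintype m]
    (Φ : Matrix n n ℂ →ₗ[ℂ] Matrix m m ℂ) (M : Matrix n n ℂ) (i j : m) :
    Φ M i j = ∑ x, ∑ y, M x y * choi Φ (i, x) (j, y) := by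
  conv_lhs => rw [matrix_eq_sum_single M]
  rw [map_sum]
  simp only [map_sum, Matrix.sum_apply]
  refine Finset.sum_congr rfl fun x _ => Finset.sum_congr rfl fun y _ => ?_
  have h := Φ.map_smul (M x y) (Matrix.single x y 1)
  rw [Matrix.smul_single, smul_eq_mul, mul_one] at h
  rw [h, choi]
  simp

lemma choi_psiMap {n k : Type*} [Fintype n] [Fintype k] [DecidableEq k]
    (A : Matrix (n × k) (n × k) ℂ) : choi (psiMap A) = A.map star := by
  ext ⟨i, a⟩ ⟨j, b⟩
  simp [choi, psiMap_apply, Matrix.single, ite_and, Matrix.map_apply]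

lemma posSemidef_sum {ι m : Type*} [Fintype m] (s : Finset ι) (f : ι → Matrix m m ℂ)
    (h : ∀ i ∈ s, (f i).PosSemidef) : (∑ i ∈ s, f i).PosSemidef := by
  classical
  induction s using Finset.induction_on with
  | empty => simpa using Matrix.PosSemidef.zero
  | insert _ _ hx ih =>
    rw [Finset.sum_insert hx]
    exact ((h _ (Finset.mem_insert_self _ _)).add
      (ih fun i hi => h i (Finset.mem_insert_of_mem hi)))

lemma lmapTensorId_entry {n m k : Type*} [Fintype n] [DecidableEq n] [Fintype m] [Fintype k]
    (Φ : Matrix n n ℂ →ₗ[ℂ] Matrix m m ℂ) (M : Matrix (n × k) (n × k) ℂ) (p q : m × k) :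
    lmapTensorId Φ M p q = ∑ x, ∑ y, M (x, p.2) (y, q.2) * choi Φ (p.1, x) (q.1, y) := by
  unfold lmapTensorId
  erw [lmap_apply_entry]

lemma idTensorLmap_psiMap {n m k : Type*} [Fintype n] [Fintype m] [Fintype k]
    (A : Matrix (n × k) (n × k) ℂ) (B : Matrix (m × k) (m × k) ℂ) (p q : m × n) :
    idTensorLmap (psiMap A) B p q = ∑ a, ∑ b, B (p.1, a) (q.1, b) * star (A (p.2, a) (q.2, b)) :=
  rfl

end Aux

/-- For every `A ∈ L(X ⊗ Z)` there is a map `Ψ_A : L(Z) → L(X)` with Choi operator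
`conj(A)` satisfying `⟨B, (Φ ⊗ id)(A)⟩ = ⟨(id ⊗ Ψ_A)(B), J(Φ)⟩` for all `Φ` and `B`;
moreover `Ψ_A` is completely positive whenever `A` is positive semidefinite. -/
theorem stmt11 {n k : Type*} [Fintype n] [DecidableEq n] [Fintype k] [DecidableEq k]
    (A : Matrix (n × k) (n × k) ℂ) :
    ∃ Ψ : Matrix k k ℂ →ₗ[ℂ] Matrix n n ℂ,
      choi Ψ = A.map star ∧
      (∀ (m : Type) [Fintype m] [DecidableEq m],
        ∀ (Φ : Matrix n n ℂ →ₗ[ℂ] Matrix m m ℂ) (B : Matrix (m × k) (m × k) ℂ),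
          minner B (lmapTensorId Φ A) = minner (idTensorLmap Ψ B) (choi Φ)) ∧
      (A.PosSemidef → IsCompletelyPositive Ψ) := by
  classical
  refine ⟨psiMap A, choi_psiMap A, ?_, ?_⟩
  · intro m _ _ Φ B
    rw [minner_eq, minner_eq]
    have key : (∑ z : ((m × k) × (m × k)) × n × n,
          star (B z.1.1 z.1.2) * (A (z.2.1, z.1.1.2) (z.2.2, z.1.2.2) *
            choi Φ (z.1.1.1, z.2.1) (z.1.2.1, z.2.2)))
        = ∑ w : ((m × n) × (m × n)) × k × k,
          star (B (w.1.1.1, w.2.1) (w.1.2.1, w.2.2)) *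
            A (w.1.1.2, w.2.1) (w.1.2.2, w.2.2) * choi Φ w.1.1 w.1.2 := by
      refine (Fintype.sum_equiv
        (⟨fun w => (((w.1.1.1, w.2.1), (w.1.2.1, w.2.2)), (w.1.1.2, w.1.2.2)),
          fun z => (((z.1.1.1, z.2.1), (z.1.2.1, z.2.2)), (z.1.1.2, z.1.2.2)),
          fun _ => rfl, fun _ => rfl⟩ :
          (((m × n) × (m × n)) × k × k) ≃ (((m × k) × (m × k)) × n × n))
        _ _ fun w => ?_).symm
      dsimp only [Equiv.coe_fn_mk]
      ring
    calc (∑ p, ∑ q, star (B p q) * lmapTensorId Φ A p q)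
        = ∑ z : ((m × k) × (m × k)) × n × n,
            star (B z.1.1 z.1.2) * (A (z.2.1, z.1.1.2) (z.2.2, z.1.2.2) *
              choi Φ (z.1.1.1, z.2.1) (z.1.2.1, z.2.2)) := by
          simp only [Fintype.sum_prod_type, lmapTensorId_entry, Finset.mul_sum]
      _ = ∑ w : ((m × n) × (m × n)) × k × k,
            star (B (w.1.1.1, w.2.1) (w.1.2.1, w.2.2)) *
              A (w.1.1.2, w.2.1) (w.1.2.2, w.2.2) * choi Φ w.1.1 w.1.2 := key
      _ = ∑ p, ∑ q, star (idTensorLmap (psiMap A) B p q) * choi Φ p q := by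
          simp only [Fintype.sum_prod_type, idTensorLmap_psiMap, star_sum, star_mul',
            star_star, Finset.sum_mul, Finset.mul_sum]
  · intro hA k' _ _ M hM
    have hmap : A.map star = Aᵀ := by
      ext p q
      have := congrFun (congrFun hA.isHermitian.eq p) q
      simp only [Matrix.conjTranspose_apply] at this
      simp [Matrix.map_apply, Matrix.transpose_apply, ← this]
    obtain ⟨S, hS⟩ : ∃ S : Matrix (n × k) (n × k) ℂ, A.map star = Sᴴ * S := by
      open scoped MatrixOrder in
      exact CStarAlgebra.nonneg_iff_eq_star_mul_self.mp (hmap ▸ hA.transpose).nonneg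
    set W : (n × k) → Matrix (n × k') (k × k') ℂ := fun s =>
      Matrix.of fun p q => star (S s (p.1, q.1)) * (if p.2 = q.2 then 1 else 0) with hW
    have hrep : lmapTensorId (psiMap A) M = ∑ s : n × k, W s * M * (W s)ᴴ := by
      ext ⟨i, c⟩ ⟨j, d⟩
      simp only [Matrix.sum_apply, Matrix.mul_apply, Matrix.conjTranspose_apply, hW,
        Matrix.of_apply, lmapTensorId, psiMap_apply, Fintype.sum_prod_type, star_mul',
        star_star]
      have hA' : ∀ a b, star (A (i, a) (j, b)) = ∑ s : n × k, star (S s (i, a)) * S s (j, b) := by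
        intro a b
        have h2 := congrFun (congrFun hS (i, a)) (j, b)
        simpa [Matrix.mul_apply, Matrix.map_apply, Matrix.conjTranspose_apply] using h2
      calc (∑ a, ∑ b, M (a, c) (b, d) * star (A (i, a) (j, b)))
          = ∑ z : (k × k) × n × k,
              M (z.1.1, c) (z.1.2, d) * (star (S z.2 (i, z.1.1)) * S z.2 (j, z.1.2)) := by
            simp only [hA', Finset.mul_sum, Fintype.sum_prod_type]
        _ = ∑ w : (n × k) × k × k,
              star (S w.1 (i, w.2.2)) * M (w.2.2, c) (w.2.1, d) * S w.1 (j, w.2.1) := by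
            refine (Fintype.sum_equiv
              (⟨fun w => ((w.2.2, w.2.1), w.1), fun z => (z.2, (z.1.2, z.1.1)),
                fun _ => rfl, fun _ => rfl⟩ :
                ((n × k) × k × k) ≃ ((k × k) × n × k)) _ _ fun w => ?_).symm
            dsimp only [Equiv.coe_fn_mk]
            ring
        _ = _ := by
            simp only [Fintype.sum_prod_type, mul_ite, ite_mul, mul_one, one_mul, mul_zero,
              zero_mul, star_one, star_zero, apply_ite (star : ℂ → ℂ), Finset.sum_ite_eq,
              Finset.sum_ite_eq', Finset.mem_univ, if_true, Finset.mul_sum, Finset.sum_mul]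
    rw [hrep]
    exact posSemidef_sum _ _ fun s _ => hM.mul_mul_conjTranspose_same (W s)

end
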